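/- Let I be a Functional Stable Marriage instance with a happy pair (m_h, w_h) whose only acceptable partners are each other, and let J be the instance obtained by deleting m_h and w_h and, for a chosen sad man m_s and sad woman w_s, adding f_{m_h}(w_h) to all of m_s's preference values and f_{w_h}(m_h) to all of w_s's preference values. Then for every stable matching μ of I, μ' = μ \ {(m_h,w_h)} is a stable matching of J with balance_J(μ') = balance_I(μ). -/
import Mathlib


open scoped Classical

/-- A Stable Marriage instance: `acc` is the mutual acceptability relation,
`pm m w` is man `m`'s preference value for woman `w` (lower = better),
`pw w m` is woman `w`'s preference value for man `m`. -/
structure SMInst (M W : Type*) where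
  acc : M → W → Prop
  pm : M → W → ℕ
  pw : W → M → ℕ

namespace SMInst

variable {M W : Type*} (I : SMInst M W)

/-- A matching, encoded as a relation: matched pairs are acceptable and
each person appears in at most one pair. -/
def IsMatching (r : M → W → Prop) : Prop :=
  (∀ m w, r m w → I.acc m w) ∧
  (∀ m w w', r m w → r m w' → w = w') ∧
  (∀ m m' w, r m w → r m' w → m = m')

/-- `m` is matched by `r`. -/
def MMatched (r : M → W → Prop) (m : M) : Prop := ∃ w, r m w

/-- `w` is matched by `r`. -/
def WMatched (r : M → W → Prop) (w : W) : Prop := ∃ m, r m w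

/-- `(m, w)` blocks `r`: the pair is acceptable, `m` is unmatched or prefers `w`
to his partner, and `w` is unmatched or prefers `m` to her partner. -/
def Blocks (r : M → W → Prop) (m : M) (w : W) : Prop :=
  I.acc m w ∧
  (∀ w', r m w' → I.pm m w < I.pm m w') ∧
  (∀ m', r m' w → I.pw w m < I.pw w m')

/-- A stable matching: a matching with no blocking pair. -/
def IsStable (r : M → W → Prop) : Prop :=
  I.IsMatching r ∧ ∀ m w, ¬ I.Blocks r m w

/-- Sum of the men's preference values over the pairs of a matching. -/
noncomputable def sumM [Fintype M] [Fintype W] (r : M → W → Prop) : ℕ :=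
  ∑ p ∈ Finset.univ.filter (fun p : M × W => r p.1 p.2), I.pm p.1 p.2

/-- Sum of the women's preference values over the pairs of a matching. -/
noncomputable def sumW [Fintype M] [Fintype W] (r : M → W → Prop) : ℕ :=
  ∑ p ∈ Finset.univ.filter (fun p : M × W => r p.1 p.2), I.pw p.2 p.1

/-- Balance of a matching. -/
noncomputable def bal [Fintype M] [Fintype W] (r : M → W → Prop) : ℕ :=
  max (I.sumM r) (I.sumW r)

/-- Blocking pair for a perfect matching given as an equivalence `M ≃ W`. -/
def BlocksE (e : M ≃ W) (m : M) (w : W) : Prop :=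
  I.acc m w ∧ I.pm m w < I.pm m (e m) ∧ I.pw w m < I.pw w (e.symm w)

/-- A stable perfect matching: all matched pairs acceptable, no blocking pair. -/
def IsStableE (e : M ≃ W) : Prop :=
  (∀ m, I.acc m (e m)) ∧ ∀ m w, ¬ I.BlocksE e m w

/-- Sum of the men's preference values in a perfect matching. -/
def sumME [Fintype M] (e : M ≃ W) : ℕ := ∑ m, I.pm m (e m)

/-- Sum of the women's preference values in a perfect matching. -/
def sumWE [Fintype W] (e : M ≃ W) : ℕ := ∑ w, I.pw w (e.symm w)

/-- Balance of a perfect matching. -/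
def balE [Fintype M] [Fintype W] (e : M ≃ W) : ℕ := max (I.sumME e) (I.sumWE e)

end SMInst

/-- Happy-pair removal, forward direction. If μ is a stable
(perfect) matching of I, then its restriction μ' = μ \ {(m_h, w_h)} is a
stable matching of the reduced instance J with balance_J(μ') = balance_I(μ). -/
theorem happy_pair_removal_forward {M W : Type*} [Fintype M] [Fintype W]
    (I : SMInst M W) (m_h m_s : M) (w_h w_s : W)
    (hms : m_s ≠ m_h) (hws : w_s ≠ w_h)
    (haccmh : ∀ w, I.acc m_h w ↔ w = w_h)
    (haccwh : ∀ m, I.acc m w_h ↔ m = m_h)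
    (J : SMInst {m : M // m ≠ m_h} {w : W // w ≠ w_h})
    (hJacc : ∀ m w, J.acc m w ↔ I.acc m.1 w.1)
    (hJpm : ∀ m w, J.pm m w =
      if m.1 = m_s then I.pm m.1 w.1 + I.pm m_h w_h else I.pm m.1 w.1)
    (hJpw : ∀ w m, J.pw w m =
      if w.1 = w_s then I.pw w.1 m.1 + I.pw w_h m_h else I.pw w.1 m.1)
    (μ : M → W → Prop) (hst : I.IsStable μ)
    (hperfM : ∀ m, SMInst.MMatched μ m) (hperfW : ∀ w, SMInst.WMatched μ w) :
    J.IsStable (fun m w => μ m.1 w.1) ∧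
    J.bal (fun m w => μ m.1 w.1) = I.bal μ := by

  classical
  obtain ⟨⟨hacc, huw, hum⟩, hnb⟩ := hst
  -- the happy pair is matched
  have hmhwh : μ m_h w_h := by
    obtain ⟨w, hw⟩ := hperfM m_h
    have hwe : w = w_h := (haccmh w).1 (hacc _ _ hw)
    subst hwe; exact hw
  -- stability
  have hstab : J.IsStable (fun m w => μ m.1 w.1) := by
    refine ⟨⟨fun m w h => (hJacc m w).2 (hacc _ _ h),
      fun m w w' h h' => Subtype.ext (huw _ _ _ h h'),
      fun m m' w h h' => Subtype.ext (hum _ _ _ h h')⟩, fun m w hb => ?_⟩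
    obtain ⟨hb1, hb2, hb3⟩ := hb
    refine hnb m.1 w.1 ⟨(hJacc m w).1 hb1, ?_, ?_⟩
    · intro w' hw'
      have hw'ne : w' ≠ w_h := by
        intro h; subst h; exact m.2 ((haccwh m.1).1 (hacc _ _ hw'))
      have := hb2 ⟨w', hw'ne⟩ hw'
      rw [hJpm, hJpm] at this
      split_ifs at this with h
      · exact lt_of_add_lt_add_right this
      · exact this
    · intro m' hm'
      have hm'ne : m' ≠ m_h := by
        intro h; subst h; exact w.2 ((haccmh w.1).1 (hacc _ _ hm'))
      have := hb3 ⟨m', hm'ne⟩ hm'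
      rw [hJpw, hJpw] at this
      split_ifs at this with h
      · exact lt_of_add_lt_add_right this
      · exact this
  refine ⟨hstab, ?_⟩
  set SI := Finset.univ.filter (fun p : M × W => μ p.1 p.2) with hSI
  set SJ := Finset.univ.filter
    (fun p : {m : M // m ≠ m_h} × {w : W // w ≠ w_h} => μ p.1.1 p.2.1) with hSJ
  have hmemI : (m_h, w_h) ∈ SI := by simp [hSI, hmhwh]
  have hkey : ∀ p : M × W, p ∈ SI.erase (m_h, w_h) →
      μ p.1 p.2 ∧ p.1 ≠ m_h ∧ p.2 ≠ w_h := by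
    intro p hp
    rw [Finset.mem_erase] at hp
    obtain ⟨hne, hp⟩ := hp
    have hμ : μ p.1 p.2 := by simpa [hSI] using hp
    refine ⟨hμ, ?_, ?_⟩
    · intro h
      apply hne
      have h2 : p.2 = w_h := (haccmh p.2).1 (h ▸ hacc _ _ hμ)
      exact Prod.ext h h2
    · intro h
      apply hne
      have h1 : p.1 = m_h := (haccwh p.1).1 (h ▸ hacc _ _ hμ)
      exact Prod.ext h1 h
  -- bijection between SJ and SI.erase (m_h, w_h)
  have hbij : ∀ (g : M → W → ℕ),
      (∑ p ∈ SJ, g p.1.1 p.2.1) = ∑ p ∈ SI.erase (m_h, w_h), g p.1 p.2 := by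
    intro g
    refine Finset.sum_bij' (fun p _ => (p.1.1, p.2.1))
      (fun p hp => (⟨p.1, (hkey p hp).2.1⟩, ⟨p.2, (hkey p hp).2.2⟩)) ?_ ?_ ?_ ?_ ?_
    · intro p hp
      have hμ : μ p.1.1 p.2.1 := by simpa [hSJ] using hp
      rw [Finset.mem_erase]
      refine ⟨?_, by simp [hSI, hμ]⟩
      intro h
      exact p.1.2 (congrArg Prod.fst h)
    · intro p hp
      have hμ : μ p.1 p.2 := (hkey p hp).1
      simp [hSJ, hμ]
    · intro p hp; rfl
    · intro p hp; rfl
    · intro p hp; rfl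
  -- partner of m_s
  obtain ⟨wms, hwms⟩ := hperfM m_s
  obtain ⟨mws, hmws⟩ := hperfW w_s
  have hfiltM : (SI.erase (m_h, w_h)).filter (fun p => p.1 = m_s) = {(m_s, wms)} := by
    ext p
    simp only [Finset.mem_filter, Finset.mem_singleton]
    constructor
    · rintro ⟨hp, h1⟩
      have := (hkey p hp).1
      rw [h1] at this
      exact Prod.ext h1 (huw _ _ _ this hwms)
    · rintro rfl
      refine ⟨Finset.mem_erase.2 ⟨?_, by simp [hSI, hwms]⟩, rfl⟩
      intro h
      exact hms (congrArg Prod.fst h)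
  have hfiltW : (SI.erase (m_h, w_h)).filter (fun p => p.2 = w_s) = {(mws, w_s)} := by
    ext p
    simp only [Finset.mem_filter, Finset.mem_singleton]
    constructor
    · rintro ⟨hp, h2⟩
      have := (hkey p hp).1
      rw [h2] at this
      exact Prod.ext (hum _ _ _ this hmws) h2
    · rintro rfl
      refine ⟨Finset.mem_erase.2 ⟨?_, by simp [hSI, hmws]⟩, rfl⟩
      intro h
      exact hws (congrArg Prod.snd h)
  have hsumM : J.sumM (fun m w => μ m.1 w.1) = I.sumM μ := by
    have h1 : J.sumM (fun m w => μ m.1 w.1)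
        = ∑ p ∈ SJ, (if p.1.1 = m_s then I.pm p.1.1 p.2.1 + I.pm m_h w_h
            else I.pm p.1.1 p.2.1) := by
      rw [SMInst.sumM]
      exact Finset.sum_congr rfl fun p _ => hJpm p.1 p.2
    rw [h1]
    have h2 : (∑ p ∈ SJ, (if p.1.1 = m_s then I.pm p.1.1 p.2.1 + I.pm m_h w_h
            else I.pm p.1.1 p.2.1))
        = ∑ p ∈ SI.erase (m_h, w_h), (if p.1 = m_s then I.pm p.1 p.2 + I.pm m_h w_h
            else I.pm p.1 p.2) :=
      hbij (fun a b => if a = m_s then I.pm a b + I.pm m_h w_h else I.pm a b)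
    rw [h2]
    have h3 : ∀ p : M × W, (if p.1 = m_s then I.pm p.1 p.2 + I.pm m_h w_h
          else I.pm p.1 p.2) = I.pm p.1 p.2 + (if p.1 = m_s then I.pm m_h w_h else 0) := by
      intro p; split_ifs <;> simp
    rw [Finset.sum_congr rfl fun p _ => h3 p, Finset.sum_add_distrib,
      ← Finset.sum_filter, hfiltM, Finset.sum_singleton]
    have h4 : I.sumM μ = I.pm m_h w_h + ∑ p ∈ SI.erase (m_h, w_h), I.pm p.1 p.2 :=
      (Finset.add_sum_erase SI (fun p => I.pm p.1 p.2) hmemI).symm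
    rw [h4]; omega
  have hsumW : J.sumW (fun m w => μ m.1 w.1) = I.sumW μ := by
    have h1 : J.sumW (fun m w => μ m.1 w.1)
        = ∑ p ∈ SJ, (if p.2.1 = w_s then I.pw p.2.1 p.1.1 + I.pw w_h m_h
            else I.pw p.2.1 p.1.1) := by
      rw [SMInst.sumW]
      exact Finset.sum_congr rfl fun p _ => hJpw p.2 p.1
    rw [h1]
    have h2 := hbij (fun a b => if b = w_s then I.pw b a + I.pw w_h m_h else I.pw b a)
    rw [h2]
    have h3 : ∀ p : M × W, (if p.2 = w_s then I.pw p.2 p.1 + I.pw w_h m_h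
          else I.pw p.2 p.1) = I.pw p.2 p.1 + (if p.2 = w_s then I.pw w_h m_h else 0) := by
      intro p; split_ifs <;> simp
    rw [Finset.sum_congr rfl fun p _ => h3 p, Finset.sum_add_distrib,
      ← Finset.sum_filter, hfiltW, Finset.sum_singleton]
    have h4 : I.sumW μ = I.pw w_h m_h + ∑ p ∈ SI.erase (m_h, w_h), I.pw p.2 p.1 :=
      (Finset.add_sum_erase SI (fun p => I.pw p.2 p.1) hmemI).symm
    rw [h4]; omega
  rw [SMInst.bal, SMInst.bal, hsumM, hsumW]
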